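/- In the vertex cover game (all sets of size 2), if s' is a state where every on agent in R (agents off under the advertising strategy s^{ad}) is best responding, then each such agent r ∈ R_on is contained in some edge in which r is the unique on endpoint; consequently |R_on| ≤ |F_R| + |F_off|, where F_R is the set of edges uncovered by s^{ad} and F_off is the set of edges whose endpoint in L = ON(s^{ad}) is off in s'. -/

import Mathlib

open Finset

/-- in the vertex cover game, every best-responding on agent of
`R = OFF(s^{ad})` has an edge where it is the unique on endpoint, and hence
`|R_on| ≤ |F_R| + |F_off|`. -/
theorem vertex_cover_Ron_bound {n : ℕ} (F : Finset (Finset (Fin n)))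
    (c : Fin n → ℝ) (w : Finset (Fin n) → ℝ)
    (hsize : ∀ σ ∈ F, σ.card = 2)
    (hc : ∀ i, 0 < c i) (hw : ∀ σ ∈ F, 0 < w σ)
    (sad s' : Fin n → Bool)
    (hbr : ∀ r, sad r = false → s' r = true →
      c r ≤ ∑ σ ∈ F.filter (fun σ => r ∈ σ ∧ ∀ j ∈ σ, j ≠ r → s' j = false), w σ) :
    (∀ r ∈ Finset.univ.filter (fun r => sad r = false ∧ s' r = true),
        ∃ σ ∈ F, r ∈ σ ∧ ∀ j ∈ σ, j ≠ r → s' j = false) ∧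
      (Finset.univ.filter (fun r => sad r = false ∧ s' r = true)).card
        ≤ (F.filter (fun σ => ∀ i ∈ σ, sad i = false)).card
          + (F.filter (fun σ => ∃ i ∈ σ, sad i = true ∧ s' i = false)).card := by
  classical
  set R := Finset.univ.filter (fun r => sad r = false ∧ s' r = true) with hR
  have h1 : ∀ r ∈ R, ∃ σ ∈ F, r ∈ σ ∧ ∀ j ∈ σ, j ≠ r → s' j = false := by
    intro r hr
    rw [hR, mem_filter] at hr
    have hb := hbr r hr.2.1 hr.2.2
    by_contra h
    push_neg at h
    have hempty : F.filter (fun σ => r ∈ σ ∧ ∀ j ∈ σ, j ≠ r → s' j = false) = ∅ := by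
      ext σ
      simp only [mem_filter, Finset.notMem_empty, iff_false, not_and]
      intro hσ hrσ hj
      obtain ⟨j, hjσ, hjr, hjs⟩ := h σ hσ hrσ
      exact hjs (hj j hjσ hjr)
    rw [hempty, Finset.sum_empty] at hb
    exact absurd hb (not_le.mpr (hc r))
  refine ⟨h1, ?_⟩
  have h1' : ∀ r : Fin n, ∃ σ : Finset (Fin n),
      r ∈ R → σ ∈ F ∧ r ∈ σ ∧ ∀ j ∈ σ, j ≠ r → s' j = false := by
    intro r
    by_cases hr : r ∈ R
    · obtain ⟨σ, hσ⟩ := h1 r hr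
      exact ⟨σ, fun _ => hσ⟩
    · exact ⟨∅, fun h => absurd h hr⟩
  choose f hf using h1'
  have key : R.card ≤ ((F.filter (fun σ => ∀ i ∈ σ, sad i = false)) ∪
      (F.filter (fun σ => ∃ i ∈ σ, sad i = true ∧ s' i = false))).card := by
    apply Finset.card_le_card_of_injOn f
    · intro r hr
      obtain ⟨hF, hrσ, huniq⟩ := hf r hr
      rw [hR, Finset.mem_coe, mem_filter] at hr
      rw [Finset.mem_coe, Finset.mem_union]
      by_cases hall : ∀ i ∈ f r, sad i = false
      · exact Or.inl (mem_filter.mpr ⟨hF, hall⟩)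
      · push_neg at hall
        obtain ⟨i, hiσ, hisad⟩ := hall
        have hir : i ≠ r := fun h => hisad (h ▸ hr.2.1)
        refine Or.inr (mem_filter.mpr ⟨hF, i, hiσ, ?_, huniq i hiσ hir⟩)
        simpa using hisad
    · intro r hr r' hr' heq
      by_contra hne
      obtain ⟨_, hrσ, huniq⟩ := hf r hr
      obtain ⟨_, hrσ', _⟩ := hf r' hr'
      simp only [Finset.mem_coe, hR, mem_filter] at hr'
      have : s' r' = false := huniq r' (heq ▸ hrσ') (Ne.symm hne)
      rw [hr'.2.2] at this
      exact Bool.true_eq_false.mp this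
  exact key.trans (Finset.card_union_le _ _)
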